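/- arXiv:0801.1265 — 2 statements merged into one kernel-verified Lean document; each statement's English description precedes it below -/
import Mathlib

section
/- Let (P^n)_{n≥1} be a time consistent family of coherent exchangeable lower previsions on ℒ(𝒳^n), with count distributions Q^n(h) := P^n(h∘T^n), and let S be the unique coherent lower prevision on 𝒱(Σ_𝒳) with Q^n(g) = S(CoMn^n(g|·)) for all n and g. Then for every continuous function h : Σ_𝒳 → ℝ, the sequence n ↦ Q^n(m ↦ h(m/n)) converges; moreover the limit functional L(h) := lim_{n→∞} Q^n(m ↦ h(m/n)) is a coherent lower prevision on the space of continuous functions on Σ_𝒳, and L(p) = S(p) for every polynomial gamble p ∈ 𝒱(Σ_𝒳). -/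
open Finset Filter Topology

/-- A coherent lower prevision on the gambles over a finite nonempty space `Ω`. -/
def LowerPrevCoherent {Ω : Type*} [Fintype Ω] [Nonempty Ω] (P : (Ω → ℝ) → ℝ) : Prop :=
  (∀ f : Ω → ℝ, sInf (Set.range f) ≤ P f) ∧
  (∀ (f : Ω → ℝ) (l : ℝ), 0 ≤ l → P (fun ω => l * f ω) = l * P f) ∧
  (∀ f g : Ω → ℝ, P f + P g ≤ P (f + g))

/-- A linear prevision on the gambles over a finite nonempty space `Ω`. -/
def LinearPrevision {Ω : Type*} [Fintype Ω] [Nonempty Ω] (P : (Ω → ℝ) → ℝ) : Prop :=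
  (∀ f g : Ω → ℝ, P (f + g) = P f + P g) ∧
  (∀ (l : ℝ) (f : Ω → ℝ), P (fun ω => l * f ω) = l * P f) ∧
  (∀ f : Ω → ℝ, (∀ ω, 0 ≤ f ω) → 0 ≤ P f) ∧
  P (fun _ => 1) = 1

/-- Exchangeability of a lower prevision on gambles on `X^N`:
`P (πf − f) ≥ 0` for every gamble `f` and every permutation `π`. -/
def Exchangeable {X : Type*} {N : ℕ} (P : ((Fin N → X) → ℝ) → ℝ) : Prop :=
  ∀ (f : (Fin N → X) → ℝ) (π : Equiv.Perm (Fin N)),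
    0 ≤ P (fun x => f (fun k => x (π k)) - f x)

/-- The set of count vectors `𝒩^n`. -/
abbrev CVec (X : Type*) [Fintype X] (n : ℕ) : Type _ := {m : X → ℕ // ∑ x, m x = n}

noncomputable instance {X : Type*} [Fintype X] [DecidableEq X] (n : ℕ) : Fintype (CVec X n) := by
  have key : ∀ (m : CVec X n) (x : X), m.1 x < n + 1 := by
    intro m x
    have h1 : m.1 x ≤ ∑ y, m.1 y :=
      Finset.single_le_sum (fun i _ => Nat.zero_le _) (Finset.mem_univ x)
    have h2 := m.2
    omega
  exact Fintype.ofInjective (fun m : CVec X n => fun x => (⟨m.1 x, key m x⟩ : Fin (n+1)))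
    (fun a b hab => Subtype.ext (funext fun x => congrArg Fin.val (congrFun hab x)))

instance {X : Type*} [Fintype X] [DecidableEq X] [Nonempty X] (n : ℕ) :
    Nonempty (CVec X n) :=
  ⟨⟨fun x => if x = Classical.arbitrary X then n else 0, by simp⟩⟩

/-- The counting map `T^n : X^n → 𝒩^n`. -/
def countMap {X : Type*} [Fintype X] [DecidableEq X] (n : ℕ) (z : Fin n → X) : CVec X n :=
  ⟨fun x => (Finset.univ.filter fun k => z k = x).card, by
    have h := Finset.card_eq_sum_card_fiberwise (f := z) (s := Finset.univ) (t := Finset.univ)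
      (fun k _ => Finset.mem_univ (z k))
    simpa using h.symm⟩

/-- `ν(m) = n!/∏ₓ mₓ!` for a count vector `m ∈ 𝒩^n`. -/
def nu {X : Type*} [Fintype X] {n : ℕ} (m : CVec X n) : ℕ :=
  Nat.multinomial Finset.univ m.1

/-- `ν(μ − m)`, which is `0` unless `m ≤ μ` componentwise. -/
def nuSub {X : Type*} [Fintype X] {n k : ℕ} (μ : CVec X (n + k)) (m : CVec X n) : ℕ :=
  if ∀ x, m.1 x ≤ μ.1 x then Nat.multinomial Finset.univ (fun x => μ.1 x - m.1 x) else 0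

/-- The multiple hyper-geometric prevision `MuHy^n(f|m) = (1/ν(m)) ∑_{z∈[m]} f(z)`. -/
noncomputable def MuHy {X : Type*} [Fintype X] [DecidableEq X] {n : ℕ}
    (f : (Fin n → X) → ℝ) (m : CVec X n) : ℝ :=
  (∑ z ∈ Finset.univ.filter fun z : Fin n → X => countMap n z = m, f z) / (nu m : ℝ)

/-- The `X`-simplex `Σ_X`, as a subtype of `X → ℝ`. -/
abbrev SimplexPt (X : Type*) [Fintype X] : Type _ :=
  {θ : X → ℝ // (∀ x, 0 ≤ θ x) ∧ ∑ x, θ x = 1}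

/-- The Bernstein basis polynomial `B_m(θ) = ν(m) ∏ₓ θₓ^{mₓ}`. -/
noncomputable def Bern {X : Type*} [Fintype X] {n : ℕ} (m : CVec X n) (θ : X → ℝ) : ℝ :=
  (nu m : ℝ) * ∏ x, θ x ^ m.1 x

/-- The count multinomial expectation `CoMn^n(g|θ) = ∑_m g(m) B_m(θ)`. -/
noncomputable def CoMn {X : Type*} [Fintype X] [DecidableEq X] {n : ℕ} (g : CVec X n → ℝ) (θ : X → ℝ) : ℝ :=
  ∑ m : CVec X n, g m * Bern m θ

/-- The multinomial expectation `Mn^n(f|θ) = ∑_z f(z) ∏ₓ θₓ^{Tₓ(z)}`. -/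
noncomputable def Mn {X : Type*} [Fintype X] [DecidableEq X] {n : ℕ}
    (f : (Fin n → X) → ℝ) (θ : X → ℝ) : ℝ :=
  ∑ z : Fin n → X, f z * ∏ x, θ x ^ (countMap n z).1 x

/-- `CoMn^n(g|·)` as a function on the simplex. -/
noncomputable def CoMnP {X : Type*} [Fintype X] [DecidableEq X] {n : ℕ} (g : CVec X n → ℝ)
    (θ : SimplexPt X) : ℝ :=
  CoMn g θ.1

/-- `Mn^n(f|·)` as a function on the simplex. -/
noncomputable def MnP {X : Type*} [Fintype X] [DecidableEq X] {n : ℕ}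
    (f : (Fin n → X) → ℝ) (θ : SimplexPt X) : ℝ :=
  Mn f θ.1

/-- Polynomial gambles on the simplex: the set `𝒱(Σ_X)`. -/
def IsPolyGamble {X : Type*} [Fintype X] [DecidableEq X] (p : SimplexPt X → ℝ) : Prop :=
  ∃ n : ℕ, 1 ≤ n ∧ ∃ g : CVec X n → ℝ, p = fun θ => CoMnP g θ

/-- Coherence of a functional on the linear space `𝒱(Σ_X)` of polynomial gambles. -/
def CoherentOnPoly {X : Type*} [Fintype X] [DecidableEq X] (S : (SimplexPt X → ℝ) → ℝ) : Prop :=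
  (∀ p, IsPolyGamble p → sInf (Set.range p) ≤ S p) ∧
  (∀ p, IsPolyGamble p → ∀ l : ℝ, 0 ≤ l → S (fun θ => l * p θ) = l * S p) ∧
  (∀ p q, IsPolyGamble p → IsPolyGamble q → S p + S q ≤ S (p + q))

/-- Cylindrical extension of a gamble on `X^n` to `X^{n+k}`. -/
def cylExt {X : Type*} {n k : ℕ} (f : (Fin n → X) → ℝ) : (Fin (n + k) → X) → ℝ :=
  fun z => f fun i => z (Fin.castLE (Nat.le_add_right n k) i)

/-- Time consistency of a family of lower previsions on the `X^n`. -/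
def PTimeConsistent {X : Type*} (P : ∀ n : ℕ, ((Fin n → X) → ℝ) → ℝ) : Prop :=
  ∀ n : ℕ, 1 ≤ n → ∀ (k : ℕ) (f : (Fin n → X) → ℝ), P n f = P (n + k) (cylExt f)

/-- Time consistency of a family of count lower previsions on the `𝒩^n`. -/
def QTimeConsistent {X : Type*} [Fintype X] [DecidableEq X] (Q : ∀ n : ℕ, (CVec X n → ℝ) → ℝ) : Prop :=
  ∀ n : ℕ, 1 ≤ n → ∀ (k : ℕ) (h : CVec X n → ℝ),
    Q n h = Q (n + k) (fun μ => ∑ m : CVec X n, ((nuSub μ m : ℝ) * (nu m : ℝ) / (nu μ : ℝ)) * h m)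

/-- The relative frequency vector `m/n ∈ Σ_X` of a count vector `m ∈ 𝒩^n`, `n ≥ 1`. -/
noncomputable def freqPt {X : Type*} [Fintype X] {n : ℕ} (hn : 0 < n) (m : CVec X n) :
    SimplexPt X :=
  ⟨fun x => (m.1 x : ℝ) / n,
   fun x => div_nonneg (Nat.cast_nonneg _) (Nat.cast_nonneg _),
   by
    rw [← Finset.sum_div]
    have h : (∑ x, (m.1 x : ℝ)) = (n : ℝ) := by exact_mod_cast m.2
    rw [h]
    exact div_self (Nat.cast_ne_zero.mpr hn.ne')⟩

/-- `ḡ(μ) = ∑_m (ν(m) ν(μ−m) / ν(μ)) g(m)`. -/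
noncomputable def gbar {X : Type*} [Fintype X] [DecidableEq X] {n k : ℕ}
    (g : CVec X n → ℝ) (μ : CVec X (n + k)) : ℝ :=
  ∑ m : CVec X n, ((nu m : ℝ) * (nuSub μ m : ℝ) / (nu μ : ℝ)) * g m

section AuxLemmas

set_option linter.unusedSectionVars false

variable {X : Type*} [Fintype X] [DecidableEq X] {n : ℕ}

lemma card_subtype_count (z : Fin n → X) (x : X) :
    Fintype.card {k // z k = x} = (countMap n z).1 x := by
  simp [countMap, Fintype.card_subtype]

lemma countMap_comp_perm (z : Fin n → X) (σ : Equiv.Perm (Fin n)) :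
    countMap n (z ∘ σ) = countMap n z := by
  apply Subtype.ext; funext x
  show (Finset.univ.filter fun k => z (σ k) = x).card = (Finset.univ.filter fun k => z k = x).card
  refine Finset.card_bij' (fun k _ => σ k) (fun k _ => σ.symm k) ?_ ?_ ?_ ?_ <;>
    simp [Finset.mem_filter]

lemma exists_countMap_eq (m : CVec X n) : ∃ z : Fin n → X, countMap n z = m := by
  have hcard : Fintype.card (Σ x : X, Fin (m.1 x)) = Fintype.card (Fin n) := by
    simp [Fintype.card_sigma, m.2]
  obtain e := Fintype.equivOfCardEq hcard
  refine ⟨fun k => (e.symm k).1, Subtype.ext (funext fun x => ?_)⟩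
  have h1 : Fintype.card {k : Fin n // (e.symm k).1 = x} = (countMap n (fun k => (e.symm k).1)).1 x :=
    card_subtype_count _ x
  rw [← h1]
  have e2 : {k : Fin n // (e.symm k).1 = x} ≃ {p : Σ y : X, Fin (m.1 y) // p.1 = x} :=
    Equiv.subtypeEquiv e.symm (fun k => Iff.rfl)
  have e3 : {p : Σ y : X, Fin (m.1 y) // p.1 = x} ≃ Fin (m.1 x) :=
    { toFun := fun p => Fin.cast (congrArg m.1 p.2) p.1.2
      invFun := fun j => ⟨⟨x, j⟩, rfl⟩
      left_inv := fun p => by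
        rcases p with ⟨⟨y, j⟩, (h : y = x)⟩; subst h; rfl
      right_inv := fun j => rfl }
  rw [Fintype.card_congr (e2.trans e3), Fintype.card_fin]

lemma exists_perm_of_countMap_eq {z z' : Fin n → X} (h : countMap n z = countMap n z') :
    ∃ σ : Equiv.Perm (Fin n), z ∘ σ = z' := by
  have hc : ∀ x, Fintype.card {k // z' k = x} = Fintype.card {k // z k = x} := by
    intro x; rw [card_subtype_count, card_subtype_count, h]
  have e : ∀ x, {k // z' k = x} ≃ {k // z k = x} := fun x => Fintype.equivOfCardEq (hc x)
  refine ⟨(Equiv.sigmaFiberEquiv z').symm.trans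
    ((Equiv.sigmaCongrRight e).trans (Equiv.sigmaFiberEquiv z)), funext fun k => ?_⟩
  simp [Equiv.sigmaFiberEquiv, Equiv.sigmaCongrRight]
  exact (e (z' k) ⟨k, rfl⟩).2

lemma card_fiber_eq_nu (m : CVec X n) :
    (Finset.univ.filter fun z : Fin n → X => countMap n z = m).card = nu m := by
  obtain ⟨z₀, hz₀⟩ := exists_countMap_eq m
  have hstab : ∀ z' : Fin n → X, countMap n z' = m →
      Fintype.card {σ : Equiv.Perm (Fin n) // z₀ ∘ ⇑σ = z'} = ∏ x, (m.1 x).factorial := by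
    intro z' hz'
    obtain ⟨τ, hτ⟩ := exists_perm_of_countMap_eq (hz₀.trans hz'.symm)
    have e : {σ : Equiv.Perm (Fin n) // z₀ ∘ ⇑σ = z₀} ≃ {σ : Equiv.Perm (Fin n) // z₀ ∘ ⇑σ = z'} :=
      { toFun := fun g => ⟨g.1 * τ, by
          funext k
          have hg := congrFun g.2 (τ k)
          have ht := congrFun hτ k
          simpa [Equiv.Perm.mul_apply] using hg.trans ht⟩
        invFun := fun h => ⟨h.1 * τ⁻¹, by
          funext k
          have hh := congrFun h.2 (τ⁻¹ k)
          have ht := congrFun hτ (τ⁻¹ k)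
          simp only [Function.comp, Equiv.Perm.mul_apply] at hh ht ⊢
          rw [hh, ← ht]
          simp⟩
        left_inv := fun g => by ext k; simp
        right_inv := fun h => by ext k; simp }
    rw [← Fintype.card_congr e, DomMulAct.stabilizer_card]
    exact Finset.prod_congr rfl fun x _ => by rw [card_subtype_count, hz₀]
  have hkey : n.factorial = (Finset.univ.filter fun z : Fin n → X => countMap n z = m).card * ∏ x, (m.1 x).factorial := by
    have h1 : (Finset.univ : Finset (Equiv.Perm (Fin n))).card = n.factorial := by
      simp [Finset.card_univ, Fintype.card_perm]
    rw [← h1, Finset.card_eq_sum_card_fiberwise (f := fun σ : Equiv.Perm (Fin n) => z₀ ∘ ⇑σ)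
      (t := Finset.univ.filter fun z : Fin n → X => countMap n z = m)
      (fun σ _ => by simp [Finset.mem_filter, countMap_comp_perm, hz₀])]
    have hin : ∀ z' ∈ Finset.univ.filter fun z : Fin n → X => countMap n z = m,
        (Finset.univ.filter fun σ : Equiv.Perm (Fin n) => z₀ ∘ ⇑σ = z').card
          = ∏ x, (m.1 x).factorial := by
      intro z' hz'
      rw [Finset.mem_filter] at hz'
      rw [← hstab z' hz'.2, Fintype.card_subtype]
    rw [Finset.sum_congr rfl hin, Finset.sum_const, smul_eq_mul]
  have hspec := Nat.multinomial_spec Finset.univ m.1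
  rw [m.2] at hspec
  have hpos : 0 < ∏ x, (m.1 x).factorial := Finset.prod_pos fun x _ => Nat.factorial_pos _
  have h2 := hkey.symm.trans hspec.symm
  exact Nat.eq_of_mul_eq_mul_right hpos (by rw [h2, Nat.mul_comm]; rfl)

lemma prod_pow_count (z : Fin n → X) (θ : X → ℝ) :
    ∏ x, θ x ^ (countMap n z).1 x = ∏ i, θ (z i) := by
  rw [← Finset.prod_fiberwise Finset.univ z (fun i => θ (z i))]
  refine Finset.prod_congr rfl fun x _ => ?_
  rw [Finset.prod_congr rfl (fun i hi => by rw [(Finset.mem_filter.mp hi).2]),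
    Finset.prod_const]
  rfl

lemma Mn_eq_sum (f : (Fin n → X) → ℝ) (θ : X → ℝ) :
    Mn f θ = ∑ z : Fin n → X, f z * ∏ i, θ (z i) := by
  exact Finset.sum_congr rfl fun z _ => by rw [prod_pow_count]

lemma CoMn_eq_Mn (g : CVec X n → ℝ) (θ : X → ℝ) :
    CoMn g θ = Mn (fun z => g (countMap n z)) θ := by
  unfold Mn CoMn Bern
  rw [← Finset.sum_fiberwise Finset.univ (countMap n)
    (fun z => g (countMap n z) * ∏ x, θ x ^ (countMap n z).1 x)]
  refine Finset.sum_congr rfl fun m _ => ?_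
  rw [Finset.sum_congr rfl (fun z hz => by rw [(Finset.mem_filter.mp hz).2]),
    Finset.sum_const, card_fiber_eq_nu, nsmul_eq_mul]
  ring

omit [DecidableEq X] in
lemma sum_prod_eval (c : Fin n → X → ℝ) :
    ∑ z : Fin n → X, ∏ i, c i (z i) = ∏ i, ∑ v, c i v := by
  have h := Finset.prod_univ_sum (fun _ : Fin n => (Finset.univ : Finset X)) c
  rw [Fintype.piFinset_univ] at h
  exact h.symm

variable {θ : X → ℝ} (h0 : ∀ x, 0 ≤ θ x) (h1 : ∑ x, θ x = 1)

include h1 in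
lemma sum_ind_prod (x : X) (s : Finset (Fin n)) :
    ∑ z : Fin n → X, (if ∀ i ∈ s, z i = x then (1:ℝ) else 0) * ∏ i, θ (z i)
      = θ x ^ s.card := by
  have hpt : ∀ z : Fin n → X,
      (if ∀ i ∈ s, z i = x then (1:ℝ) else 0) * ∏ i, θ (z i)
        = ∏ i, (if i ∈ s then (if z i = x then θ (z i) else 0) else θ (z i)) := by
    intro z
    rw [← Finset.prod_mul_prod_compl s (fun i => (if i ∈ s then (if z i = x then θ (z i) else 0) else θ (z i)))]
    rw [← Finset.prod_mul_prod_compl s (fun i => θ (z i))]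
    by_cases h : ∀ i ∈ s, z i = x
    · rw [if_pos h, one_mul]
      congr 1
      · exact Finset.prod_congr rfl fun i hi => by rw [if_pos hi, if_pos (h i hi)]
      · exact Finset.prod_congr rfl fun i hi => by
          rw [if_neg (by simpa using (Finset.mem_compl.mp hi))]
    · rw [if_neg h, zero_mul]
      push_neg at h
      obtain ⟨i₀, hi₀, hzi₀⟩ := h
      rw [Finset.prod_eq_zero hi₀ (by rw [if_pos hi₀, if_neg hzi₀]), zero_mul]
  rw [Finset.sum_congr rfl fun z _ => hpt z,
    show (∑ z : Fin n → X, ∏ i, (if i ∈ s then (if z i = x then θ (z i) else 0) else θ (z i)))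
      = ∏ i : Fin n, ∑ v, (if i ∈ s then (if v = x then θ v else 0) else θ v) from
      sum_prod_eval (fun i v => if i ∈ s then (if v = x then θ v else 0) else θ v)]
  have : ∀ i : Fin n, (∑ v, (if i ∈ s then (if v = x then θ v else 0) else θ v))
      = (if i ∈ s then θ x else 1) := by
    intro i
    by_cases hi : i ∈ s <;> simp [hi, h1]
  rw [Finset.prod_congr rfl fun i _ => this i, Finset.prod_ite_mem, Finset.univ_inter,
    Finset.prod_const]

include h1 in
lemma moment0 : ∑ z : Fin n → X, ∏ i, θ (z i) = 1 := by
  have h := sum_prod_eval (fun _ : Fin n => θ)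
  rw [h]
  simp [h1]

include h1 in
lemma moment1 (x : X) :
    ∑ z : Fin n → X, ((countMap n z).1 x : ℝ) * ∏ i, θ (z i) = n * θ x := by
  have hcount : ∀ z : Fin n → X, ((countMap n z).1 x : ℝ)
      = ∑ i, (if ∀ j ∈ ({i} : Finset (Fin n)), z j = x then (1:ℝ) else 0) := by
    intro z
    show ((Finset.univ.filter fun k => z k = x).card : ℝ) = _
    rw [Finset.card_filter]
    push_cast
    exact Finset.sum_congr rfl fun i _ => by simp
  calc ∑ z : Fin n → X, ((countMap n z).1 x : ℝ) * ∏ i, θ (z i)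
      = ∑ i : Fin n, ∑ z : Fin n → X,
          (if ∀ j ∈ ({i} : Finset (Fin n)), z j = x then (1:ℝ) else 0) * ∏ i, θ (z i) := by
        rw [Finset.sum_comm]
        exact Finset.sum_congr rfl fun z _ => by rw [hcount z, Finset.sum_mul]
    _ = ∑ i : Fin n, θ x ^ (1:ℕ) := Finset.sum_congr rfl fun i _ => by
        rw [sum_ind_prod h1 x ({i} : Finset (Fin n)), Finset.card_singleton]
    _ = n * θ x := by simp [mul_comm]

include h1 in
lemma moment2 (x : X) :
    ∑ z : Fin n → X, ((countMap n z).1 x : ℝ)^2 * ∏ i, θ (z i)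
      = n * θ x + (n^2 - n) * θ x ^ 2 := by
  have hcount : ∀ z : Fin n → X, ((countMap n z).1 x : ℝ)^2
      = ∑ i : Fin n, ∑ j : Fin n,
          (if ∀ k ∈ ({i, j} : Finset (Fin n)), z k = x then (1:ℝ) else 0) := by
    intro z
    have h1' : ((countMap n z).1 x : ℝ) = ∑ i : Fin n, (if z i = x then (1:ℝ) else 0) := by
      show ((Finset.univ.filter fun k => z k = x).card : ℝ) = _
      rw [Finset.card_filter]; push_cast; rfl
    rw [h1', sq, Finset.sum_mul_sum]
    refine Finset.sum_congr rfl fun i _ => Finset.sum_congr rfl fun j _ => ?_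
    by_cases hi : z i = x <;> by_cases hj : z j = x <;> simp [hi, hj]
  calc ∑ z : Fin n → X, ((countMap n z).1 x : ℝ)^2 * ∏ i, θ (z i)
      = ∑ i : Fin n, ∑ j : Fin n, ∑ z : Fin n → X,
          (if ∀ k ∈ ({i, j} : Finset (Fin n)), z k = x then (1:ℝ) else 0) * ∏ i, θ (z i) := by
        have hz : ∀ z : Fin n → X, ((countMap n z).1 x : ℝ)^2 * ∏ i, θ (z i)
            = ∑ i : Fin n, ∑ j : Fin n,
              (if ∀ k ∈ ({i, j} : Finset (Fin n)), z k = x then (1:ℝ) else 0) * ∏ i, θ (z i) := by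
          intro z
          rw [hcount z, Finset.sum_mul]
          exact Finset.sum_congr rfl fun i _ => Finset.sum_mul _ _ _
        rw [Finset.sum_congr rfl fun z _ => hz z, Finset.sum_comm]
        exact Finset.sum_congr rfl fun i _ => Finset.sum_comm
    _ = ∑ i : Fin n, ∑ j : Fin n, θ x ^ (({i, j} : Finset (Fin n)).card) :=
        Finset.sum_congr rfl fun i _ => Finset.sum_congr rfl fun j _ =>
          sum_ind_prod h1 x ({i, j} : Finset (Fin n))
    _ = ∑ i : Fin n, ∑ j : Fin n, (if j = i then θ x else θ x ^ 2) := by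
        refine Finset.sum_congr rfl fun i _ => Finset.sum_congr rfl fun j _ => ?_
        by_cases hij : j = i
        · subst hij; simp
        · rw [Finset.card_pair (Ne.symm hij), if_neg hij]
    _ = n * θ x + (n^2 - n) * θ x ^ 2 := by
        have inner : ∀ i : Fin n, ∑ j : Fin n, (if j = i then θ x else θ x^2)
            = θ x + ((n:ℝ) - 1) * θ x ^ 2 := by
          intro i
          have hterm : ∀ j : Fin n, (if j = i then θ x else θ x^2)
              = θ x^2 + (if j = i then θ x - θ x^2 else 0) := fun j => by split <;> ring
          rw [Finset.sum_congr rfl fun j _ => hterm j, Finset.sum_add_distrib,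
            Finset.sum_const, Finset.sum_ite_eq' Finset.univ i (fun _ => θ x - θ x^2)]
          simp [Finset.card_univ]
          ring
        rw [Finset.sum_congr rfl fun i (_ : i ∈ Finset.univ) => inner i, Finset.sum_const,
          Finset.card_univ]
        simp
        ring

include h1 in
lemma variance_z (x : X) :
    ∑ z : Fin n → X, (((countMap n z).1 x : ℝ)/n - θ x)^2 * ∏ i, θ (z i)
      = (1/(n:ℝ)^2) * (n * θ x + ((n:ℝ)^2 - n) * θ x ^ 2)
        - (2*θ x/(n:ℝ)) * (n * θ x) + θ x^2 := by
  have hterm : ∀ z : Fin n → X, (((countMap n z).1 x : ℝ)/n - θ x)^2 * ∏ i, θ (z i)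
      = (1/(n:ℝ)^2) * (((countMap n z).1 x : ℝ)^2 * ∏ i, θ (z i))
        - (2*θ x/(n:ℝ)) * (((countMap n z).1 x : ℝ) * ∏ i, θ (z i))
        + (θ x^2) * ∏ i, θ (z i) := by
    intro z
    rcases eq_or_ne (n:ℝ) 0 with h | h
    · rw [h]; simp
    · field_simp; ring
  rw [Finset.sum_congr rfl fun z _ => hterm z, Finset.sum_add_distrib,
    Finset.sum_sub_distrib, ← Finset.mul_sum, ← Finset.mul_sum, ← Finset.mul_sum,
    moment2 h1 x, moment1 h1 x, moment0 h1]
  ring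

include h1 in
lemma variance_le (hn : 0 < n) (hx0 : 0 ≤ θ x) (hx1 : θ x ≤ 1) :
    ∑ z : Fin n → X, (((countMap n z).1 x : ℝ)/n - θ x)^2 * ∏ i, θ (z i) ≤ 1 / n := by
  rw [variance_z h1 x]
  have hne : (n:ℝ) ≠ 0 := Nat.cast_ne_zero.mpr hn.ne'
  have h1n : (1:ℝ) ≤ (n:ℝ) := by exact_mod_cast hn
  have key : (1/(n:ℝ)^2) * (n * θ x + ((n:ℝ)^2 - n) * θ x ^ 2)
        - (2*θ x/(n:ℝ)) * (n * θ x) + θ x^2 = (θ x - θ x^2) / n := by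
    field_simp; ring
  rw [key]
  rw [div_le_div_iff₀ (by positivity) (by positivity)]
  nlinarith

lemma CoMn_apply_count (g : CVec X n → ℝ) (θ : X → ℝ) :
    CoMn g θ = ∑ z : Fin n → X, g (countMap n z) * ∏ i, θ (z i) := by
  rw [CoMn_eq_Mn, Mn_eq_sum]

lemma Mn_eq_CoMn_MuHy (f : (Fin n → X) → ℝ) (θ : X → ℝ) :
    Mn f θ = CoMn (MuHy f) θ := by
  unfold CoMn Bern MuHy Mn
  rw [← Finset.sum_fiberwise Finset.univ (countMap n)
    (fun z => f z * ∏ x, θ x ^ (countMap n z).1 x)]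
  refine (Finset.sum_congr rfl fun m _ => ?_).symm
  have hnu : (nu m : ℝ) ≠ 0 := Nat.cast_ne_zero.mpr (Nat.multinomial_pos _ _).ne'
  have hfib : ∀ z ∈ Finset.univ.filter (fun z : Fin n → X => countMap n z = m),
      f z * ∏ x, θ x ^ (countMap n z).1 x = f z * ∏ x, θ x ^ m.1 x := fun z hz => by
    rw [(Finset.mem_filter.mp hz).2]
  rw [Finset.sum_congr rfl hfib, ← Finset.sum_mul]
  field_simp

include h1 in
lemma Mn_cylExt (k : ℕ) (f : (Fin n → X) → ℝ) :
    Mn (cylExt (k := k) f) θ = Mn f θ := by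
  rw [Mn_eq_sum, Mn_eq_sum]
  let e : (Fin n → X) × (Fin k → X) ≃ (Fin (n + k) → X) :=
    (Equiv.sumArrowEquivProdArrow (Fin n) (Fin k) X).symm.trans
      (Equiv.arrowCongr finSumFinEquiv (Equiv.refl X))
  have he1 : ∀ p : (Fin n → X) × (Fin k → X), ∀ i : Fin n,
      e p (Fin.castLE (Nat.le_add_right n k) i) = p.1 i := by
    intro p i
    show (Sum.elim p.1 p.2 (finSumFinEquiv.symm (Fin.castLE (Nat.le_add_right n k) i))) = p.1 i
    have h : (Fin.castLE (Nat.le_add_right n k) i) = finSumFinEquiv (Sum.inl i) := by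
      rw [finSumFinEquiv_apply_left]; rfl
    rw [h, Equiv.symm_apply_apply, Sum.elim_inl]
  have he2 : ∀ p : (Fin n → X) × (Fin k → X), ∀ i : Fin k,
      e p (finSumFinEquiv (Sum.inr i)) = p.2 i := by
    intro p i
    show (Sum.elim p.1 p.2 (finSumFinEquiv.symm (finSumFinEquiv (Sum.inr i)))) = p.2 i
    rw [Equiv.symm_apply_apply, Sum.elim_inr]
  rw [← Equiv.sum_comp e (fun w => cylExt (k := k) f w * ∏ j, θ (w j))]
  rw [Fintype.sum_prod_type]
  have hsplit : ∀ p : (Fin n → X) × (Fin k → X),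
      cylExt (k := k) f (e p) * ∏ j, θ (e p j)
        = (f p.1 * ∏ i, θ (p.1 i)) * ∏ i, θ (p.2 i) := by
    intro p
    have hf : cylExt (k := k) f (e p) = f p.1 := by
      unfold cylExt
      exact congrArg f (funext fun i => he1 p i)
    have hprod : ∏ j, θ (e p j) = (∏ i, θ (p.1 i)) * ∏ i, θ (p.2 i) := by
      rw [← Equiv.prod_comp finSumFinEquiv (fun j => θ (e p j)), Fintype.prod_sum_type]
      congr 1
      · refine Finset.prod_congr rfl fun i _ => ?_
        rw [show finSumFinEquiv (Sum.inl i) = Fin.castLE (Nat.le_add_right n k) i from by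
          rw [finSumFinEquiv_apply_left]; rfl, he1]
      · exact Finset.prod_congr rfl fun i _ => by rw [he2]
    rw [hf, hprod]; ring
  calc ∑ z₁ : Fin n → X, ∑ z₂ : Fin k → X, cylExt (k := k) f (e (z₁, z₂)) * ∏ j, θ (e (z₁, z₂) j)
      = ∑ z₁ : Fin n → X, ∑ z₂ : Fin k → X, (f z₁ * ∏ i, θ (z₁ i)) * ∏ i, θ (z₂ i) :=
        Finset.sum_congr rfl fun z₁ _ => Finset.sum_congr rfl fun z₂ _ => hsplit (z₁, z₂)
    _ = ∑ z₁ : Fin n → X, (f z₁ * ∏ i, θ (z₁ i)) * ∑ z₂ : Fin k → X, ∏ i, θ (z₂ i) := by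
        exact Finset.sum_congr rfl fun z₁ _ => by rw [Finset.mul_sum]
    _ = ∑ z₁ : Fin n → X, f z₁ * ∏ i, θ (z₁ i) := by
        rw [moment0 h1]
        exact Finset.sum_congr rfl fun z₁ _ => by ring

lemma CoMn_degree_raise {N : ℕ} (hnN : n ≤ N) (g : CVec X n → ℝ) :
    ∃ g' : CVec X N → ℝ, ∀ θ : SimplexPt X, CoMnP g θ = CoMnP g' θ := by
  obtain ⟨k, rfl⟩ := Nat.exists_eq_add_of_le hnN
  refine ⟨MuHy (cylExt (fun z => g (countMap n z))), fun θ => ?_⟩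
  unfold CoMnP
  rw [CoMn_eq_Mn, ← Mn_cylExt (θ := θ.1) θ.2.2 k, Mn_eq_CoMn_MuHy]

instance [Nonempty X] : Nonempty (SimplexPt X) := by
  obtain ⟨x₀⟩ := ‹Nonempty X›
  exact ⟨⟨fun x => if x = x₀ then 1 else 0, fun x => by positivity, by simp⟩⟩

omit [DecidableEq X] in
lemma simplex_compact : CompactSpace (SimplexPt X) :=
  isCompact_iff_compactSpace.mp (isCompact_stdSimplex ℝ X)

lemma continuous_CoMnP (g : CVec X n → ℝ) : Continuous (fun θ : SimplexPt X => CoMnP g θ) := by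
  unfold CoMnP CoMn Bern
  refine continuous_finset_sum _ fun m _ => Continuous.mul continuous_const ?_
  exact Continuous.mul continuous_const
    (continuous_finset_prod _ fun x _ => ((continuous_apply x).comp continuous_subtype_val).pow _)

lemma Bern_nonneg {m : CVec X n} {θ : X → ℝ} (h0 : ∀ x, 0 ≤ θ x) : 0 ≤ Bern m θ := by
  unfold Bern
  exact mul_nonneg (Nat.cast_nonneg _) (Finset.prod_nonneg fun x _ => pow_nonneg (h0 x) _)

include h0 h1 in
lemma sum_Bern : ∑ m : CVec X n, Bern m θ = 1 := by
  have h := CoMn_apply_count (fun _ : CVec X n => (1:ℝ)) θ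
  unfold CoMn at h
  simpa [moment0 h1] using h

lemma variance_Bern {n : ℕ} (θ : SimplexPt X) (hn : 0 < n) (x : X) :
    ∑ m : CVec X n, ((freqPt hn m).1 x - θ.1 x)^2 * Bern m θ.1 ≤ 1 / n := by
  have h := CoMn_apply_count (fun m : CVec X n => ((freqPt hn m).1 x - θ.1 x)^2) θ.1
  unfold CoMn at h
  have hx1 : θ.1 x ≤ 1 :=
    (Finset.single_le_sum (fun y _ => θ.2.1 y) (Finset.mem_univ x)).trans_eq θ.2.2
  exact le_trans (le_of_eq h) (variance_le θ.2.2 hn (θ.2.1 x) hx1)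

lemma bernstein_unif [Nonempty X] (h : SimplexPt X → ℝ) (hh : Continuous h) :
    ∀ ε : ℝ, 0 < ε → ∃ N : ℕ, ∀ n : ℕ, N ≤ n → ∀ θ : SimplexPt X,
      |CoMnP (fun m : CVec X (n+1) => h (freqPt n.succ_pos m)) θ - h θ| ≤ ε := by
  intro ε hε
  haveI : CompactSpace (SimplexPt X) := simplex_compact
  -- bound on h
  obtain ⟨M₀, hM₀⟩ := (isCompact_range (continuous_abs.comp hh)).bddAbove
  set M : ℝ := |M₀| + 1 with hM
  have hMpos : 0 < M := by positivity
  have hMb : ∀ θ : SimplexPt X, |h θ| ≤ M := fun θ => by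
    have h1 := hM₀ (Set.mem_range_self (f := abs ∘ h) θ)
    simp only [Function.comp] at h1
    have h2 := le_abs_self M₀
    rw [hM]
    linarith
  -- uniform continuity
  have hu : UniformContinuous h := CompactSpace.uniformContinuous_of_continuous hh
  obtain ⟨δ, hδ, hδh⟩ := Metric.uniformContinuous_iff.mp hu (ε/2) (by linarith)
  set δ' : ℝ := δ/2 with hδ'
  have hδ'pos : 0 < δ' := by positivity
  set c : ℝ := 2*M/δ'^2 with hc
  have hcpos : 0 < c := by positivity
  -- pointwise bound
  have hpt : ∀ (θ η : SimplexPt X),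
      |h η - h θ| ≤ ε/2 + c * ∑ x, (η.1 x - θ.1 x)^2 := by
    intro θ η
    by_cases hcase : ∀ x, |η.1 x - θ.1 x| ≤ δ'
    · have hdist : dist η θ ≤ δ' := by
        rw [Subtype.dist_eq, dist_pi_le_iff hδ'pos.le]
        intro x
        rw [Real.dist_eq]
        exact hcase x
      have := hδh (a := η) (b := θ) (lt_of_le_of_lt hdist (by simp [hδ']; linarith))
      rw [Real.dist_eq] at this
      have hnn : 0 ≤ c * ∑ x, (η.1 x - θ.1 x)^2 := by positivity
      linarith
    · push_neg at hcase
      obtain ⟨x₀, hx₀⟩ := hcase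
      have hsum : δ'^2 ≤ ∑ x, (η.1 x - θ.1 x)^2 := by
        have hle1 : δ' ≤ |η.1 x₀ - θ.1 x₀| := le_of_lt hx₀
        have hle2 : δ'^2 ≤ (η.1 x₀ - θ.1 x₀)^2 := by
          rw [← sq_abs (η.1 x₀ - θ.1 x₀)]
          exact pow_le_pow_left₀ hδ'pos.le hle1 2
        exact hle2.trans (Finset.single_le_sum (f := fun x => (η.1 x - θ.1 x)^2)
          (fun x _ => sq_nonneg _) (Finset.mem_univ x₀))
      have h2M : |h η - h θ| ≤ 2*M := by
        have h1 := hMb η; have h2 := hMb θ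
        calc |h η - h θ| ≤ |h η| + |h θ| := abs_sub _ _
          _ ≤ 2*M := by linarith
      have : 2*M ≤ c * ∑ x, (η.1 x - θ.1 x)^2 := by
        rw [hc]
        rw [div_mul_eq_mul_div, le_div_iff₀ (by positivity)]
        nlinarith
      linarith
  -- choose N
  obtain ⟨N, hN⟩ := exists_nat_ge (2 * c * (Fintype.card X) / ε)
  refine ⟨N, fun n hn θ => ?_⟩
  have hnpos : (0:ℝ) < n + 1 := by positivity
  set g : CVec X (n+1) → ℝ := fun m => h (freqPt n.succ_pos m) with hg
  have hs1 : ∑ m : CVec X (n+1), Bern m θ.1 = 1 := sum_Bern θ.2.1 θ.2.2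
  have hdiff : CoMnP g θ - h θ = ∑ m : CVec X (n+1), (g m - h θ) * Bern m θ.1 := by
    unfold CoMnP CoMn
    rw [Finset.sum_congr rfl (fun m _ => by ring :
      ∀ m ∈ Finset.univ, (g m - h θ) * Bern m θ.1 = g m * Bern m θ.1 - h θ * Bern m θ.1),
      Finset.sum_sub_distrib, ← Finset.mul_sum, hs1]
    ring
  rw [hdiff]
  calc |∑ m : CVec X (n+1), (g m - h θ) * Bern m θ.1|
      ≤ ∑ m : CVec X (n+1), |g m - h θ| * Bern m θ.1 := by
        refine (Finset.abs_sum_le_sum_abs _ _).trans (le_of_eq ?_)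
        exact Finset.sum_congr rfl fun m _ => by
          rw [abs_mul, abs_of_nonneg (Bern_nonneg θ.2.1)]
    _ ≤ ∑ m : CVec X (n+1), (ε/2 + c * ∑ x, ((freqPt n.succ_pos m).1 x - θ.1 x)^2) * Bern m θ.1 := by
        refine Finset.sum_le_sum fun m _ => ?_
        exact mul_le_mul_of_nonneg_right (hpt θ (freqPt n.succ_pos m)) (Bern_nonneg θ.2.1)
    _ = ε/2 + c * ∑ x, ∑ m : CVec X (n+1), ((freqPt n.succ_pos m).1 x - θ.1 x)^2 * Bern m θ.1 := by
        have hexp : ∀ m ∈ (Finset.univ : Finset (CVec X (n+1))),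
            (ε/2 + c * ∑ x, ((freqPt n.succ_pos m).1 x - θ.1 x)^2) * Bern m θ.1
              = ε/2 * Bern m θ.1
                + c * ∑ x, (((freqPt n.succ_pos m).1 x - θ.1 x)^2 * Bern m θ.1) := by
          intro m _
          rw [← Finset.sum_mul]
          ring
        rw [Finset.sum_congr rfl hexp, Finset.sum_add_distrib, ← Finset.mul_sum, hs1, mul_one,
          ← Finset.mul_sum, Finset.sum_comm]
    _ ≤ ε/2 + c * ∑ x : X, (1 / ((n:ℝ)+1)) := by
        have hvle : ∀ x ∈ (Finset.univ : Finset X),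
            ∑ m : CVec X (n+1), ((freqPt n.succ_pos m).1 x - θ.1 x)^2 * Bern m θ.1
            ≤ 1 / ((n:ℝ)+1) := by
          intro x _
          have hv := variance_Bern θ (n.succ_pos) x
          push_cast at hv ⊢
          linarith
        have hsums := Finset.sum_le_sum hvle
        have hmul := mul_le_mul_of_nonneg_left hsums hcpos.le
        linarith
    _ ≤ ε/2 + ε/2 := by
        rw [Finset.sum_const, Finset.card_univ, nsmul_eq_mul]
        have hcard : (0:ℝ) ≤ (Fintype.card X : ℝ) := Nat.cast_nonneg _
        have hNn : (N:ℝ) ≤ n := Nat.cast_le.mpr hn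
        have h1 : 2 * c * (Fintype.card X) ≤ ε * (n+1) := by
          have : 2 * c * (Fintype.card X) ≤ ε * N := by
            rw [div_le_iff₀ hε] at hN; linarith
          nlinarith
        have h2 : c * ((Fintype.card X) * (1/((n:ℝ)+1))) ≤ ε/2 := by
          rw [mul_one_div, ← mul_div_assoc, div_le_iff₀ hnpos]
          linarith
        linarith
    _ = ε := by ring

lemma CoMn_combo {n : ℕ} (a b : ℝ) (g1 g2 : CVec X n → ℝ) (θ : X → ℝ) :
    CoMn (fun m => a * g1 m + b * g2 m) θ = a * CoMn g1 θ + b * CoMn g2 θ := by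
  unfold CoMn
  rw [Finset.mul_sum, Finset.mul_sum, ← Finset.sum_add_distrib]
  exact Finset.sum_congr rfl fun m _ => by ring

lemma isPoly_combo {p q : SimplexPt X → ℝ} (a b : ℝ)
    (hp : IsPolyGamble p) (hq : IsPolyGamble q) :
    IsPolyGamble (fun θ => a * p θ + b * q θ) := by
  obtain ⟨n, hn, g, rfl⟩ := hp
  obtain ⟨n', hn', g', rfl⟩ := hq
  obtain ⟨g1, hg1⟩ := CoMn_degree_raise (le_max_left n n') g
  obtain ⟨g2, hg2⟩ := CoMn_degree_raise (le_max_right n n') g'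
  refine ⟨max n n', le_trans hn (le_max_left _ _), fun m => a * g1 m + b * g2 m,
    funext fun θ => ?_⟩
  show a * CoMnP g θ + b * CoMnP g' θ = CoMnP (fun m => a * g1 m + b * g2 m) θ
  rw [hg1 θ, hg2 θ]
  unfold CoMnP
  rw [CoMn_combo]

lemma S_sub_le [Nonempty X] {S : (SimplexPt X → ℝ) → ℝ} (hco : CoherentOnPoly S)
    {p q : SimplexPt X → ℝ} (hp : IsPolyGamble p) (hq : IsPolyGamble q)
    {C : ℝ} (hC : ∀ θ, |p θ - q θ| ≤ C) : S q - S p ≤ C := by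
  haveI : Nonempty (SimplexPt X) := inferInstance
  have hd : IsPolyGamble (fun θ => p θ - q θ) := by
    have hcombo := isPoly_combo 1 (-1) hp hq
    have heq : (fun θ : SimplexPt X => 1 * p θ + (-1) * q θ) = fun θ => p θ - q θ :=
      funext fun θ => by ring
    rwa [heq] at hcombo
  have hsum := hco.2.2 q (fun θ => p θ - q θ) hq hd
  have heq2 : (q + fun θ => p θ - q θ) = p := funext fun θ => by
    show q θ + (p θ - q θ) = p θ
    ring
  rw [heq2] at hsum
  have hinf : -C ≤ sInf (Set.range fun θ => p θ - q θ) := by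
    refine le_csInf (Set.range_nonempty _) ?_
    rintro y ⟨θ, rfl⟩
    show -C ≤ p θ - q θ
    linarith [(abs_le.mp (hC θ)).1]
  have hSd := hco.1 _ hd
  linarith

lemma S_abs_le [Nonempty X] {S : (SimplexPt X → ℝ) → ℝ} (hco : CoherentOnPoly S)
    {p q : SimplexPt X → ℝ} (hp : IsPolyGamble p) (hq : IsPolyGamble q)
    {C : ℝ} (hC : ∀ θ, |p θ - q θ| ≤ C) : |S p - S q| ≤ C := by
  have h1 := S_sub_le hco hp hq hC
  have h2 := S_sub_le hco hq hp (fun θ => by rw [abs_sub_comm]; exact hC θ)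
  exact abs_le.mpr ⟨by linarith, by linarith⟩

end AuxLemmas

/-- convergence in distribution of the sample frequencies: for every
continuous `h` on the simplex, `Q^n(h(·/n))` converges; the limit functional `L` is a
coherent lower prevision on the continuous gambles and coincides with `S` on `𝒱(Σ_X)`. -/
theorem stmt12 {X : Type*} [Fintype X] [DecidableEq X] [Nonempty X]
    (P : ∀ n : ℕ, ((Fin n → X) → ℝ) → ℝ)
    (hP : ∀ n : ℕ, 1 ≤ n → LowerPrevCoherent (P n) ∧ Exchangeable (P n))
    (htc : PTimeConsistent P)
    (Q : ∀ n : ℕ, (CVec X n → ℝ) → ℝ)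
    (hQ : ∀ (n : ℕ) (h : CVec X n → ℝ), Q n h = P n (fun z => h (countMap n z)))
    (S : (SimplexPt X → ℝ) → ℝ)
    (hS : CoherentOnPoly S ∧
      ∀ n : ℕ, 1 ≤ n → ∀ g : CVec X n → ℝ, Q n g = S (CoMnP g)) :
    ∃ L : (SimplexPt X → ℝ) → ℝ,
      (∀ h : SimplexPt X → ℝ, Continuous h →
        Tendsto (fun n : ℕ => Q (n + 1) (fun m => h (freqPt n.succ_pos m))) atTop
          (𝓝 (L h))) ∧
      ((∀ h : SimplexPt X → ℝ, Continuous h → sInf (Set.range h) ≤ L h) ∧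
       (∀ h : SimplexPt X → ℝ, Continuous h → ∀ l : ℝ, 0 ≤ l →
          L (fun θ => l * h θ) = l * L h) ∧
       (∀ h g : SimplexPt X → ℝ, Continuous h → Continuous g → L h + L g ≤ L (h + g))) ∧
      (∀ p : SimplexPt X → ℝ, IsPolyGamble p → L p = S p) := by
  classical
  obtain ⟨hco, hQS⟩ := hS
  haveI : Nonempty (SimplexPt X) := inferInstance
  haveI : CompactSpace (SimplexPt X) := simplex_compact
  -- the approximating sequence
  let seq : (SimplexPt X → ℝ) → ℕ → ℝ :=
    fun h n => Q (n + 1) (fun m => h (freqPt n.succ_pos m))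
  let Bop : (SimplexPt X → ℝ) → ℕ → (SimplexPt X → ℝ) :=
    fun h n => CoMnP (fun m : CVec X (n + 1) => h (freqPt n.succ_pos m))
  have hseqS : ∀ (h : SimplexPt X → ℝ) (n : ℕ), seq h n = S (Bop h n) :=
    fun h n => hQS (n + 1) (Nat.succ_le_succ (Nat.zero_le n)) _
  have hpoly : ∀ (h : SimplexPt X → ℝ) (n : ℕ), IsPolyGamble (Bop h n) :=
    fun h n => ⟨n + 1, Nat.succ_le_succ (Nat.zero_le n), _, rfl⟩
  -- Cauchy property
  have hcauchy : ∀ h : SimplexPt X → ℝ, Continuous h → CauchySeq (seq h) := by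
    intro h hh
    rw [Metric.cauchySeq_iff]
    intro ε hε
    obtain ⟨N, hN⟩ := bernstein_unif h hh (ε / 4) (by linarith)
    refine ⟨N, fun a ha b hb => ?_⟩
    have habs : |S (Bop h a) - S (Bop h b)| ≤ ε / 2 := by
      refine S_abs_le hco (hpoly h a) (hpoly h b) fun θ => ?_
      have h1 := hN a ha θ
      have h2 := hN b hb θ
      have : |Bop h a θ - Bop h b θ| ≤ |Bop h a θ - h θ| + |h θ - Bop h b θ| := by
        have := abs_sub_le (Bop h a θ) (h θ) (Bop h b θ)
        linarith
      rw [abs_sub_comm (h θ) (Bop h b θ)] at this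
      linarith
    rw [Real.dist_eq, hseqS, hseqS]
    linarith [abs_nonneg (S (Bop h a) - S (Bop h b))]
  -- the limit functional
  let L : (SimplexPt X → ℝ) → ℝ := fun h => limUnder atTop (seq h)
  have hLtendsto : ∀ h : SimplexPt X → ℝ, Continuous h →
      Tendsto (seq h) atTop (𝓝 (L h)) := by
    intro h hh
    obtain ⟨a, ha⟩ := cauchySeq_tendsto_of_complete (hcauchy h hh)
    have : L h = a := ha.limUnder_eq
    rw [this]
    exact ha
  refine ⟨L, fun h hh => hLtendsto h hh, ⟨?_, ?_, ?_⟩, ?_⟩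
  · -- bounded below by the infimum
    intro h hh
    have hbdd : BddBelow (Set.range h) := (isCompact_range hh).bddBelow
    have hlower : ∀ n, sInf (Set.range h) ≤ seq h n := by
      intro n
      rw [hseqS]
      refine le_trans ?_ (hco.1 _ (hpoly h n))
      refine le_csInf (Set.range_nonempty _) ?_
      rintro y ⟨θ, rfl⟩
      show sInf (Set.range h) ≤ Bop h n θ
      have hsum1 : ∑ m : CVec X (n + 1), Bern m θ.1 = 1 := sum_Bern θ.2.1 θ.2.2
      calc sInf (Set.range h) = sInf (Set.range h) * ∑ m : CVec X (n + 1), Bern m θ.1 := by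
            rw [hsum1, mul_one]
        _ = ∑ m : CVec X (n + 1), sInf (Set.range h) * Bern m θ.1 := Finset.mul_sum _ _ _
        _ ≤ ∑ m : CVec X (n + 1), h (freqPt n.succ_pos m) * Bern m θ.1 :=
            Finset.sum_le_sum fun m _ => mul_le_mul_of_nonneg_right
              (csInf_le hbdd ⟨_, rfl⟩) (Bern_nonneg θ.2.1)
        _ = Bop h n θ := rfl
    exact ge_of_tendsto' (hLtendsto h hh) hlower
  · -- positive homogeneity
    intro h hh l hl
    have heq : ∀ n, seq (fun θ => l * h θ) n = l * seq h n := by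
      intro n
      rw [hseqS (fun θ => l * h θ) n, hseqS h n]
      have hBeq : Bop (fun θ => l * h θ) n = fun θ => l * Bop h n θ := by
        funext θ
        show CoMn (fun m : CVec X (n + 1) => l * h (freqPt n.succ_pos m)) θ.1 = _
        have := CoMn_combo (X := X) l 0 (fun m : CVec X (n + 1) => h (freqPt n.succ_pos m))
          (fun m : CVec X (n + 1) => h (freqPt n.succ_pos m)) θ.1
        simp only [zero_mul, add_zero] at this
        exact this
      rw [hBeq, hco.2.1 _ (hpoly h n) l hl]
    have ht2 : Tendsto (seq fun θ => l * h θ) atTop (𝓝 (l * L h)) := by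
      have := (hLtendsto h hh).const_mul l
      refine this.congr fun n => (heq n).symm
    exact ht2.limUnder_eq
  · -- superadditivity
    intro h g hh hg
    have hle : ∀ n, seq h n + seq g n ≤ seq (h + g) n := by
      intro n
      rw [hseqS h n, hseqS g n, hseqS (h + g) n]
      have hBeq : Bop (h + g) n = Bop h n + Bop g n := by
        funext θ
        show CoMn (fun m : CVec X (n + 1) => (h + g) (freqPt n.succ_pos m)) θ.1
          = CoMn _ θ.1 + CoMn _ θ.1
        have := CoMn_combo (X := X) 1 1 (fun m : CVec X (n + 1) => h (freqPt n.succ_pos m))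
          (fun m : CVec X (n + 1) => g (freqPt n.succ_pos m)) θ.1
        simp only [one_mul] at this ⊢
        exact this
      rw [hBeq]
      exact hco.2.2 _ _ (hpoly h n) (hpoly g n)
    exact le_of_tendsto_of_tendsto' ((hLtendsto h hh).add (hLtendsto g hg))
      (hLtendsto (h + g) (by exact hh.add hg)) hle
  · -- agreement with S on polynomials
    intro p hp
    have hcont : Continuous p := by
      obtain ⟨n, hn, g, rfl⟩ := hp
      exact continuous_CoMnP g
    have htend : Tendsto (seq p) atTop (𝓝 (S p)) := by
      rw [Metric.tendsto_atTop]
      intro ε hε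
      obtain ⟨N, hN⟩ := bernstein_unif p hcont (ε / 2) (by linarith)
      refine ⟨N, fun n hn' => ?_⟩
      rw [Real.dist_eq, hseqS p n]
      have habs : |S (Bop p n) - S p| ≤ ε / 2 :=
        S_abs_le hco (hpoly p n) hp fun θ => hN n hn' θ
      linarith [abs_nonneg (S (Bop p n) - S p)]
    exact htend.limUnder_eq
end

section
/- Let N ≥ 1. The functional E on ℒ(𝒳^N) defined by E(f) := min_{m∈𝒩^N} MuHy^N(f|m) is a coherent exchangeable lower prevision on ℒ(𝒳^N), and it is the point-wise smallest one: every coherent exchangeable lower prevision P on ℒ(𝒳^N) satisfies P(f) ≥ E(f) for every gamble f on 𝒳^N. -/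
open Finset Filter Topology

section Aux

variable {X : Type*} [Fintype X] [DecidableEq X] {N : ℕ}

lemma countMap_comp_perm_s14 (z : Fin N → X) (π : Equiv.Perm (Fin N)) :
    countMap N (fun k => z (π k)) = countMap N z := by
  apply Subtype.ext
  funext x
  show (Finset.univ.filter fun k => z (π k) = x).card = (Finset.univ.filter fun k => z k = x).card
  exact Finset.card_equiv π (fun k => by simp)

lemma sum_fiber_comp_perm (f : (Fin N → X) → ℝ) (m : CVec X N) (π : Equiv.Perm (Fin N)) :
    ∑ z ∈ Finset.univ.filter (fun z : Fin N → X => countMap N z = m),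
        f (fun k => z (π k))
      = ∑ z ∈ Finset.univ.filter (fun z : Fin N → X => countMap N z = m), f z := by
  refine Finset.sum_equiv (Equiv.arrowCongr π.symm (Equiv.refl X)) (fun z => ?_) (fun z _ => ?_)
  · simp only [Finset.mem_filter, Finset.mem_univ, true_and]
    rw [show ((π.symm).arrowCongr (Equiv.refl X)) z = fun k => z (π k) from rfl,
      countMap_comp_perm_s14]
  · rfl

lemma exists_perm_of_countMap_eq_s14 {z w : Fin N → X} (h : countMap N z = countMap N w) :
    ∃ τ : Equiv.Perm (Fin N), ∀ k, z (τ k) = w k := by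
  have e : ∀ x : X, { k // w k = x } ≃ { k // z k = x } := by
    intro x
    apply Fintype.equivOfCardEq
    rw [Fintype.card_subtype, Fintype.card_subtype]
    exact (congrArg (fun m : CVec X N => m.1 x) h).symm
  exact ⟨Equiv.ofFiberEquiv e, fun k => Equiv.ofFiberEquiv_map e k⟩

open MvPolynomial in
lemma prod_X_pow_univ (e : X → ℕ) :
    (∏ x : X, (MvPolynomial.X x : MvPolynomial X ℕ) ^ e x)
      = MvPolynomial.monomial (Finsupp.equivFunOnFinite.symm e) 1 := by
  rw [← MvPolynomial.prod_X_pow_eq_monomial]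
  refine (Finset.prod_subset (Finset.subset_univ _) ?_).symm
  intro x _ hx
  have h0 : (Finsupp.equivFunOnFinite.symm e) x = 0 := Finsupp.notMem_support_iff.mp hx
  rw [show e x = 0 from h0, pow_zero]

open MvPolynomial in
lemma card_fiber (m : CVec X N) :
    (Finset.univ.filter fun z : Fin N → X => countMap N z = m).card = nu m := by
  classical
  set d : X →₀ ℕ := Finsupp.equivFunOnFinite.symm m.1 with hd
  have lhs : ((∑ x : X, (MvPolynomial.X x : MvPolynomial X ℕ)) ^ N)
      = ∑ m' : CVec X N,
          ((Finset.univ.filter fun z : Fin N → X => countMap N z = m').card)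
            • MvPolynomial.monomial (Finsupp.equivFunOnFinite.symm m'.1) 1 := by
    rw [Fintype.sum_pow]
    have h1 : ∀ z : Fin N → X, (∏ k, (MvPolynomial.X (z k) : MvPolynomial X ℕ))
        = MvPolynomial.monomial (Finsupp.equivFunOnFinite.symm (countMap N z).1) 1 := by
      intro z
      rw [← prod_X_pow_univ]
      rw [← Finset.prod_fiberwise Finset.univ z (fun k => (MvPolynomial.X (z k) : MvPolynomial X ℕ))]
      refine Finset.prod_congr rfl fun x _ => ?_
      rw [Finset.prod_congr rfl (fun k hk => by
        rw [(Finset.mem_filter.mp hk).2] :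
          ∀ k ∈ Finset.univ.filter fun k => z k = x,
            (MvPolynomial.X (z k) : MvPolynomial X ℕ) = MvPolynomial.X x),
        Finset.prod_const]
      rfl
    rw [Finset.sum_congr rfl fun z _ => h1 z]
    rw [← Finset.sum_fiberwise Finset.univ (countMap N)
      (fun z => MvPolynomial.monomial (Finsupp.equivFunOnFinite.symm (countMap N z).1)
        (1 : ℕ))]
    refine Finset.sum_congr rfl fun m' _ => ?_
    rw [Finset.sum_congr rfl (fun z hz => by rw [(Finset.mem_filter.mp hz).2]),
      Finset.sum_const]
  have rhs : ((∑ x : X, (MvPolynomial.X x : MvPolynomial X ℕ)) ^ N)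
      = ∑ k ∈ Finset.piAntidiag Finset.univ N,
          MvPolynomial.monomial (Finsupp.equivFunOnFinite.symm k)
            (Nat.multinomial Finset.univ k) := by
    rw [Finset.sum_pow_eq_sum_piAntidiag]
    refine Finset.sum_congr rfl fun k _ => ?_
    rw [prod_X_pow_univ, ← MvPolynomial.C_eq_coe_nat, Nat.cast_id,
      MvPolynomial.C_mul_monomial, mul_one]
  have hinj : Function.Injective
      (fun e : X → ℕ => Finsupp.equivFunOnFinite.symm e) :=
    Finsupp.equivFunOnFinite.symm.injective
  have key := congrArg (MvPolynomial.coeff d) (lhs.symm.trans rhs)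
  rw [MvPolynomial.coeff_sum, MvPolynomial.coeff_sum] at key
  have e1 : ∀ m' : CVec X N,
      MvPolynomial.coeff d
          (((Finset.univ.filter fun z : Fin N → X => countMap N z = m').card)
            • MvPolynomial.monomial (Finsupp.equivFunOnFinite.symm m'.1) 1)
        = if m' = m then (Finset.univ.filter fun z : Fin N → X => countMap N z = m').card
          else 0 := by
    intro m'
    rw [MvPolynomial.coeff_smul, MvPolynomial.coeff_monomial]
    have : (Finsupp.equivFunOnFinite.symm m'.1 = d) = (m' = m) := by
      rw [hd]
      exact propext ⟨fun h => Subtype.ext (hinj h), fun h => by rw [h]⟩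
    simp only [this]
    split <;> simp
  have e2 : ∀ k ∈ Finset.piAntidiag (Finset.univ : Finset X) N,
      MvPolynomial.coeff d
          (MvPolynomial.monomial (Finsupp.equivFunOnFinite.symm k)
            (Nat.multinomial Finset.univ k))
        = if k = m.1 then Nat.multinomial Finset.univ k else 0 := by
    intro k _
    rw [MvPolynomial.coeff_monomial]
    have : (Finsupp.equivFunOnFinite.symm k = d) = (k = m.1) := by
      rw [hd]
      exact propext ⟨fun h => hinj h, fun h => by rw [h]⟩
    simp only [this]
  rw [Finset.sum_congr rfl (fun m' _ => e1 m'), Finset.sum_congr rfl e2,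
    Finset.sum_ite_eq' Finset.univ m
      (fun m' : CVec X N => (Finset.univ.filter fun z : Fin N → X => countMap N z = m').card),
    Finset.sum_ite_eq' (Finset.piAntidiag Finset.univ N) m.1
      (fun k => Nat.multinomial Finset.univ k)] at key
  have hm : m.1 ∈ Finset.piAntidiag (Finset.univ : Finset X) N := by
    rw [Finset.mem_piAntidiag]
    exact ⟨m.2, fun i _ => Finset.mem_univ i⟩
  rw [if_pos (Finset.mem_univ m), if_pos hm] at key
  exact key

lemma nu_cast_pos (m : CVec X N) : (0 : ℝ) < (nu m : ℝ) := by
  exact_mod_cast Nat.multinomial_pos _ _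

lemma muHy_symm (f : (Fin N → X) → ℝ) (z : Fin N → X) :
    MuHy f (countMap N z)
      = (1 / (N.factorial : ℝ)) * ∑ π : Equiv.Perm (Fin N), f (fun k => z (π k)) := by
  classical
  set m := countMap N z with hm
  set S := Finset.univ.filter (fun w : Fin N → X => countMap N w = m) with hS
  have hconst : ∀ w ∈ S, (∑ π : Equiv.Perm (Fin N), f (fun k => w (π k)))
      = ∑ π : Equiv.Perm (Fin N), f (fun k => z (π k)) := by
    intro w hw
    have hw' : countMap N z = countMap N w := by
      rw [← hm, (Finset.mem_filter.mp hw).2]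
    obtain ⟨τ, hτ⟩ := exists_perm_of_countMap_eq_s14 hw'
    calc (∑ π : Equiv.Perm (Fin N), f (fun k => w (π k)))
        = ∑ π : Equiv.Perm (Fin N), f (fun k => z ((τ * π) k)) := by
          refine Finset.sum_congr rfl fun π _ => ?_
          congr 1
          funext k
          rw [Equiv.Perm.mul_apply, hτ]
      _ = ∑ π : Equiv.Perm (Fin N), f (fun k => z (π k)) := by
          exact Fintype.sum_equiv (Equiv.mulLeft τ) _ _ (fun π => rfl)
  have H1 : (∑ w ∈ S, ∑ π : Equiv.Perm (Fin N), f (fun k => w (π k)))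
      = (S.card : ℝ) * ∑ π : Equiv.Perm (Fin N), f (fun k => z (π k)) := by
    rw [Finset.sum_congr rfl hconst, Finset.sum_const, nsmul_eq_mul]
  have H2 : (∑ w ∈ S, ∑ π : Equiv.Perm (Fin N), f (fun k => w (π k)))
      = (N.factorial : ℝ) * ∑ w ∈ S, f w := by
    rw [Finset.sum_comm]
    rw [Finset.sum_congr rfl (fun π _ => sum_fiber_comp_perm f m π)]
    rw [Finset.sum_const, nsmul_eq_mul, Finset.card_univ]
    congr 2
    simp [Fintype.card_perm, Fintype.card_fin]
  have hcard : (S.card : ℝ) = (nu m : ℝ) := Nat.cast_inj.mpr (card_fiber m)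
  have hν : (0 : ℝ) < (nu m : ℝ) := nu_cast_pos m
  have hfac : (0 : ℝ) < (N.factorial : ℝ) := by exact_mod_cast N.factorial_pos
  have key : (nu m : ℝ) * ∑ π : Equiv.Perm (Fin N), f (fun k => z (π k))
      = (N.factorial : ℝ) * ∑ w ∈ S, f w := by
    rw [← hcard, ← H1, H2]
  simp only [MuHy, ← hS]
  rw [div_eq_iff (ne_of_gt hν)]
  field_simp
  linarith [key]

open Pointwise in
lemma sInf_range_mul {ι : Type*} [Nonempty ι] (l : ℝ) (hl : 0 ≤ l) (h : ι → ℝ) :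
    sInf (Set.range fun i => l * h i) = l * sInf (Set.range h) := by
  have : (Set.range fun i => l * h i) = l • (Set.range h) := by
    simp only [← smul_eq_mul]
    exact Set.range_smul l h
  rw [this, Real.sInf_smul_of_nonneg hl, smul_eq_mul]

lemma P_zero {Ω : Type*} [Fintype Ω] [Nonempty Ω] {P : (Ω → ℝ) → ℝ}
    (hP : LowerPrevCoherent P) : P (fun _ => (0 : ℝ)) = 0 := by
  have := hP.2.1 (fun _ => (0 : ℝ)) 0 le_rfl
  simpa using this

lemma P_sum {Ω : Type*} [Fintype Ω] [Nonempty Ω] {P : (Ω → ℝ) → ℝ}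
    (hP : LowerPrevCoherent P) {ι : Type*} (s : Finset ι) (q : ι → Ω → ℝ) :
    ∑ i ∈ s, P (q i) ≤ P (fun ω => ∑ i ∈ s, q i ω) := by
  classical
  induction s using Finset.cons_induction with
  | empty => simp [P_zero hP]
  | cons a s ha ih =>
    rw [Finset.sum_cons]
    calc P (q a) + ∑ i ∈ s, P (q i)
        ≤ P (q a) + P (fun ω => ∑ i ∈ s, q i ω) := by linarith
      _ ≤ P (q a + fun ω => ∑ i ∈ s, q i ω) := hP.2.2 _ _
      _ = P (fun ω => ∑ i ∈ Finset.cons a s ha, q i ω) := by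
          congr 1
          funext ω
          simp only [Pi.add_apply, Finset.sum_cons]

lemma P_exch_nonneg {X : Type*} {N : ℕ} {P : ((Fin N → X) → ℝ) → ℝ}
    (hx : Exchangeable P) (f : (Fin N → X) → ℝ) (π : Equiv.Perm (Fin N)) :
    0 ≤ P (fun x => f x - f (fun k => x (π k))) := by
  have := hx (fun x => f (fun k => x (π k))) π⁻¹
  simpa [Equiv.Perm.inv_def] using this

lemma P_ge {X : Type*} [Fintype X] [DecidableEq X] [Nonempty X] {N : ℕ}
    {P : ((Fin N → X) → ℝ) → ℝ} (hP : LowerPrevCoherent P) (hx : Exchangeable P)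
    (f : (Fin N → X) → ℝ) :
    sInf (Set.range fun m : CVec X N => MuHy f m) ≤ P f := by
  classical
  set g : (Fin N → X) → ℝ :=
    fun z => (1 / (N.factorial : ℝ)) * ∑ π : Equiv.Perm (Fin N), f (fun k => z (π k)) with hg
  have hgz : ∀ z, g z = MuHy f (countMap N z) := fun z => (muHy_symm f z).symm
  have h1 : ∀ z, sInf (Set.range fun m : CVec X N => MuHy f m) ≤ g z := by
    intro z
    rw [hgz]
    exact csInf_le ((Set.finite_range _).bddBelow) ⟨_, rfl⟩
  have hPg : sInf (Set.range fun m : CVec X N => MuHy f m) ≤ P g := by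
    refine le_trans (le_csInf (Set.range_nonempty g) ?_) (hP.1 g)
    rintro b ⟨z, rfl⟩
    exact h1 z
  have hfg : f - g = fun z =>
      (1 / (N.factorial : ℝ)) *
        ∑ π : Equiv.Perm (Fin N), (f z - f (fun k => z (π k))) := by
    funext z
    simp only [Pi.sub_apply, hg]
    rw [Finset.sum_sub_distrib, Finset.sum_const, Finset.card_univ]
    have hcard : Fintype.card (Equiv.Perm (Fin N)) = N.factorial := by
      simp [Fintype.card_perm, Fintype.card_fin]
    rw [hcard]
    have hne : (N.factorial : ℝ) ≠ 0 := Nat.cast_ne_zero.mpr N.factorial_ne_zero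
    field_simp
    ring
  have key : 0 ≤ P (f - g) := by
    rw [hfg, hP.2.1 _ _ (by positivity)]
    apply mul_nonneg (by positivity)
    refine le_trans ?_ (P_sum hP Finset.univ (fun π : Equiv.Perm (Fin N) =>
      fun z => f z - f (fun k => z (π k))))
    exact Finset.sum_nonneg fun π _ => P_exch_nonneg hx f π
  have hsup := hP.2.2 g (f - g)
  have hgf : g + (f - g) = f := by ring
  rw [hgf] at hsup
  linarith

end Aux

/-- the vacuous-count model `E(f) := min_m MuHy^N(f|m)` is the point-wise
smallest coherent exchangeable lower prevision on `ℒ(X^N)`. -/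
theorem stmt14 {X : Type*} [Fintype X] [DecidableEq X] [Nonempty X] {N : ℕ} (hN : 1 ≤ N)
    (E : ((Fin N → X) → ℝ) → ℝ)
    (hE : ∀ f : (Fin N → X) → ℝ, E f = sInf (Set.range fun m : CVec X N => MuHy f m)) :
    LowerPrevCoherent E ∧ Exchangeable E ∧
      ∀ P : ((Fin N → X) → ℝ) → ℝ, LowerPrevCoherent P → Exchangeable P →
        ∀ f : (Fin N → X) → ℝ, E f ≤ P f := by
  classical
  have hbddμ : ∀ f : (Fin N → X) → ℝ,
      BddBelow (Set.range fun m : CVec X N => MuHy f m) :=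
    fun f => (Set.finite_range _).bddBelow
  have hneμ : ∀ f : (Fin N → X) → ℝ,
      (Set.range fun m : CVec X N => MuHy f m).Nonempty :=
    fun f => Set.range_nonempty _
  refine ⟨⟨?_, ?_, ?_⟩, ?_, ?_⟩
  · -- bounded below by inf
    intro f
    rw [hE]
    refine le_csInf (hneμ f) ?_
    rintro b ⟨m, rfl⟩
    have hν : (0 : ℝ) < (nu m : ℝ) := nu_cast_pos m
    have hc : ∀ z, sInf (Set.range f) ≤ f z :=
      fun z => csInf_le (Set.finite_range f).bddBelow ⟨z, rfl⟩
    have hsum : (nu m : ℝ) * sInf (Set.range f)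
        ≤ ∑ z ∈ Finset.univ.filter (fun z : Fin N → X => countMap N z = m), f z := by
      have h := Finset.card_nsmul_le_sum
        (Finset.univ.filter (fun z : Fin N → X => countMap N z = m)) f
        (sInf (Set.range f)) (fun z _ => hc z)
      rw [card_fiber m] at h
      simpa [nsmul_eq_mul] using h
    simp only [MuHy]
    rw [le_div_iff₀ hν, mul_comm]
    exact hsum
  · -- homogeneity
    intro f l hl
    rw [hE, hE]
    have hμ : ∀ m : CVec X N, MuHy (fun ω => l * f ω) m = l * MuHy f m := by
      intro m
      simp only [MuHy]
      rw [← Finset.mul_sum, mul_div_assoc]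
    simp only [hμ]
    exact sInf_range_mul l hl _
  · -- superadditivity
    intro f g
    rw [hE, hE, hE]
    refine le_csInf (hneμ _) ?_
    rintro b ⟨m, rfl⟩
    have hμ : MuHy (f + g) m = MuHy f m + MuHy g m := by
      simp only [MuHy, Pi.add_apply, Finset.sum_add_distrib, add_div]
    show _ ≤ MuHy (f + g) m
    rw [hμ]
    exact add_le_add (csInf_le (hbddμ f) ⟨m, rfl⟩) (csInf_le (hbddμ g) ⟨m, rfl⟩)
  · -- exchangeability
    intro f π
    rw [hE]
    have hμ : ∀ m : CVec X N,
        MuHy (fun x => f (fun k => x (π k)) - f x) m = 0 := by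
      intro m
      simp only [MuHy]
      rw [Finset.sum_sub_distrib, sum_fiber_comp_perm f m π, sub_self, zero_div]
    rw [show (fun m : CVec X N => MuHy (fun x => f (fun k => x (π k)) - f x) m)
        = fun _ : CVec X N => (0 : ℝ) from funext hμ]
    rw [Set.range_const, csInf_singleton]
  · -- minimality
    intro P hP hx f
    rw [hE]
    exact P_ge hP hx f
end
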